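/- No one-way deterministic one-counter automaton (1D1CA) over the alphabet {a,b,c,d} solves the promise problem ONE-NONE, i.e., for every 1D1CA M it is not the case that M accepts every string in ONE·NONE and rejects every string in NONE·ONE. -/

import Mathlib

/-- Input symbols extended with the left (`cent`) and right (`dollar`) end-markers. -/
inductive TSym (α : Type) : Type
  | cent : TSym α
  | letter : α → TSym α
  | dollar : TSym α

/-- The tape content `¢ w $` for an input word `w`. -/
def tagged {α : Type} (w : List α) : List (TSym α) :=
  TSym.cent :: (w.map TSym.letter ++ [TSym.dollar])

/-- A one-way deterministic one-counter automaton. -/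
structure OneD1CA (α : Type) where
  Q : Type
  [fintypeQ : Fintype Q]
  [decQ : DecidableEq Q]
  q0 : Q
  acc : Set Q
  m : ℕ
  δ : Q → TSym α → Bool → Q × ℤ
  bound : ∀ q σ z, |(δ q σ z).2| ≤ (m : ℤ)

attribute [instance] OneD1CA.fintypeQ OneD1CA.decQ

namespace OneD1CA

variable {α : Type} (M : OneD1CA α)

/-- One computation step on a configuration (state, counter value). -/
def step (p : M.Q × ℤ) (σ : TSym α) : M.Q × ℤ :=
  ((M.δ p.1 σ (decide (p.2 = 0))).1, p.2 + (M.δ p.1 σ (decide (p.2 = 0))).2)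

/-- Configuration reached from the initial configuration after reading a list of tape symbols. -/
def confAfter (l : List (TSym α)) : M.Q × ℤ :=
  l.foldl M.step (M.q0, 0)

/-- The automaton accepts `w` iff the state after reading `¢ w $` is accepting. -/
def accepts (w : List α) : Prop :=
  (M.confAfter (tagged w)).1 ∈ M.acc

/-- The automaton recognizes the language `L` if it accepts exactly the members of `L`. -/
def recognizes (L : Set (List α)) : Prop :=
  ∀ w : List α, M.accepts w ↔ w ∈ L

end OneD1CA

/-- The alphabet `{a, b, c, d}`. -/
inductive ΓN : Type
  | a : ΓN
  | b : ΓN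
  | c : ΓN
  | d : ΓN
deriving DecidableEq

/-- Exactly one of three propositions holds. -/
def exactlyOne (P Q R : Prop) : Prop :=
  (P ∧ ¬Q ∧ ¬R) ∨ (¬P ∧ Q ∧ ¬R) ∨ (¬P ∧ ¬Q ∧ R)

/-- `#_a(u) = #_b(u)`. -/
def eqAB (u : List ΓN) : Prop := u.count ΓN.a = u.count ΓN.b
/-- `#_b(u) = #_c(u)`. -/
def eqBC (u : List ΓN) : Prop := u.count ΓN.b = u.count ΓN.c
/-- `#_c(u) = #_a(u)`. -/
def eqCA (u : List ΓN) : Prop := u.count ΓN.c = u.count ΓN.a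

/-- The language `ONE`: strings `u ++ y` with `u ∈ {a,b,c}*`, `y ∈ {d}*`,
`|y| ≥ |u|`, and exactly one of the three count equalities holding for `u`. -/
def ONE : Language ΓN :=
  {w | ∃ u y : List ΓN, w = u ++ y ∧ (∀ x ∈ u, x ≠ ΓN.d) ∧ (∀ x ∈ y, x = ΓN.d) ∧
    u.length ≤ y.length ∧ exactlyOne (eqAB u) (eqBC u) (eqCA u)}

/-- The language `NONE`: as `ONE`, but none of the three count equalities holds. -/
def NONE : Language ΓN :=
  {w | ∃ u y : List ΓN, w = u ++ y ∧ (∀ x ∈ u, x ≠ ΓN.d) ∧ (∀ x ∈ y, x = ΓN.d) ∧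
    u.length ≤ y.length ∧ ¬ eqAB u ∧ ¬ eqBC u ∧ ¬ eqCA u}

namespace Stmt6Aux
open OneD1CA

variable (M : OneD1CA ΓN)

/-- Run the machine from an arbitrary configuration. -/
def confFrom (c : M.Q × ℤ) (l : List (TSym ΓN)) : M.Q × ℤ := l.foldl M.step c

lemma confFrom_append (c : M.Q × ℤ) (l1 l2 : List (TSym ΓN)) :
    confFrom M c (l1 ++ l2) = confFrom M (confFrom M c l1) l2 :=
  List.foldl_append

lemma abs_step (c : M.Q × ℤ) (σ : TSym ΓN) : |(M.step c σ).2 - c.2| ≤ (M.m : ℤ) := by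
  simpa [OneD1CA.step] using M.bound c.1 σ (decide (c.2 = 0))

lemma counter_bound (l : List (TSym ΓN)) (c : M.Q × ℤ) :
    |(confFrom M c l).2 - c.2| ≤ (M.m : ℤ) * l.length := by
  induction l generalizing c with
  | nil => simp [confFrom]
  | cons σ l ih =>
    have h1 : confFrom M c (σ :: l) = confFrom M (M.step c σ) l := rfl
    have h2 := ih (M.step c σ)
    have h3 := abs_step M c σ
    have h4 := abs_sub_le (confFrom M c (σ :: l)).2 (M.step c σ).2 c.2
    rw [h1] at h4 ⊢
    have : ((σ :: l).length : ℤ) = (l.length : ℤ) + 1 := by push_cast [List.length_cons]; ring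
    rw [this]
    nlinarith [h2, h3, h4]

/-- The canonical word `a^i b^j c^l`. -/
def wrd (i j l : ℕ) : List ΓN :=
  List.replicate i ΓN.a ++ List.replicate j ΓN.b ++ List.replicate l ΓN.c

lemma wrd_length (i j l : ℕ) : (wrd i j l).length = i + j + l := by
  simp [wrd]; omega

lemma wrd_no_d (i j l : ℕ) : ∀ x ∈ wrd i j l, x ≠ ΓN.d := by
  intro x hx
  simp only [wrd, List.mem_append, List.mem_replicate] at hx
  rcases hx with (⟨_, rfl⟩ | ⟨_, rfl⟩) | ⟨_, rfl⟩ <;> decide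

lemma count_wrd₂ (i j l x y z : ℕ) :
    (wrd i j l ++ wrd x y z).count ΓN.a = i + x ∧
    (wrd i j l ++ wrd x y z).count ΓN.b = j + y ∧
    (wrd i j l ++ wrd x y z).count ΓN.c = l + z := by
  refine ⟨?_, ?_, ?_⟩ <;> simp [wrd, List.count_append, List.count_replicate]

/-- The arithmetic "shift trick": given two distinct count-triples of equal sum, we can
append counts `x y z` making the first exactly-one and the second none. -/
lemma shift (i1 j1 l1 i2 j2 l2 : ℕ) (hsum : i1 + j1 + l1 = i2 + j2 + l2)
    (hne : ¬ (i1 = i2 ∧ j1 = j2)) :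
    ∃ x y z : ℕ,
      exactlyOne (i1 + x = j1 + y) (j1 + y = l1 + z) (l1 + z = i1 + x) ∧
      ¬ (i2 + x = j2 + y) ∧ ¬ (j2 + y = l2 + z) ∧ ¬ (l2 + z = i2 + x) := by
  by_cases h : i1 + j2 = i2 + j1
  · exact ⟨0, l1 + (i1 + i2 + 1), j1 + (i1 + i2 + 1), by unfold exactlyOne; omega⟩
  · exact ⟨j1 + (l1 + l2 + 1), i1 + (l1 + l2 + 1), 0, by unfold exactlyOne; omega⟩

lemma mem_ONE_of (u : List ΓN) (hu : ∀ x ∈ u, x ≠ ΓN.d)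
    (h1 : exactlyOne (eqAB u) (eqBC u) (eqCA u)) :
    u ++ List.replicate u.length ΓN.d ∈ ONE := by
  refine ⟨u, _, rfl, hu, ?_, ?_, h1⟩
  · intro x hx; exact List.eq_of_mem_replicate hx
  · simp

lemma mem_NONE_of (u : List ΓN) (hu : ∀ x ∈ u, x ≠ ΓN.d)
    (h1 : ¬ eqAB u) (h2 : ¬ eqBC u) (h3 : ¬ eqCA u) :
    u ++ List.replicate u.length ΓN.d ∈ NONE := by
  refine ⟨u, _, rfl, hu, ?_, ?_, h1, h2, h3⟩
  · intro x hx; exact List.eq_of_mem_replicate hx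
  · simp

/-- From any configuration `c`, there are words `z1 ∈ ONE` and `z2 ∈ NONE` leading to the
same configuration. -/
lemma main (c : M.Q × ℤ) :
    ∃ z1 z2 : List ΓN, z1 ∈ ONE ∧ z2 ∈ NONE ∧
      confFrom M c (z1.map TSym.letter) = confFrom M c (z2.map TSym.letter) := by
  classical
  have hQ : Nonempty M.Q := ⟨M.q0⟩
  set K := Fintype.card M.Q with hK
  have hK1 : 1 ≤ K := Fintype.card_pos
  set n : ℕ := K * (4 * M.m + 1) with hn
  set B : ℤ := (M.m : ℤ) * (2 * n) with hB
  set f : ℕ × ℕ → M.Q × ℤ := fun p =>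
    confFrom M c ((wrd p.1 p.2 (2 * n - p.1 - p.2)).map TSym.letter) with hf
  have hcard : ((Finset.univ : Finset M.Q) ×ˢ Finset.Icc (c.2 - B) (c.2 + B)).card <
      ((Finset.range (n+1)) ×ˢ (Finset.range (n+1))).card := by
    rw [Finset.card_product, Finset.card_product, Finset.card_range, Finset.card_univ,
      Int.card_Icc]
    have : (c.2 + B + 1 - (c.2 - B)).toNat = 4 * M.m * n + 1 := by
      have : c.2 + B + 1 - (c.2 - B) = ((4 * M.m * n + 1 : ℕ) : ℤ) := by
        rw [hB]; push_cast; ring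
      rw [this, Int.toNat_natCast]
    rw [this, ← hK]
    have e1 : n = 4 * (M.m * K) + K := by rw [hn]; ring
    have e2 : K * (4 * M.m * n + 1) = 4 * (M.m * K) * n + K := by ring
    have e3 : (n + 1) * (n + 1) = n * n + 2 * n + 1 := by ring
    have h4 : 4 * (M.m * K) ≤ n := e1 ▸ Nat.le_add_right _ K
    have h5 : K ≤ n := e1 ▸ Nat.le_add_left K _
    have h6 : 4 * (M.m * K) * n ≤ n * n := Nat.mul_le_mul_right n h4
    linarith
  have hmaps : ∀ p ∈ (Finset.range (n+1)) ×ˢ (Finset.range (n+1)),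
      f p ∈ (Finset.univ : Finset M.Q) ×ˢ Finset.Icc (c.2 - B) (c.2 + B) := by
    intro p hp
    rw [Finset.mem_product] at hp ⊢
    refine ⟨Finset.mem_univ _, ?_⟩
    rw [Finset.mem_Icc]
    simp only [hf]
    have hlen : ((wrd p.1 p.2 (2 * n - p.1 - p.2)).map TSym.letter).length = 2 * n := by
      rw [List.length_map, wrd_length]
      have h1 := Finset.mem_range.mp hp.1
      have h2 := Finset.mem_range.mp hp.2
      omega
    have hb := counter_bound M ((wrd p.1 p.2 (2 * n - p.1 - p.2)).map TSym.letter) c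
    rw [hlen, abs_le] at hb
    rw [hB]
    push_cast at hb ⊢
    constructor <;> linarith [hb.1, hb.2]
  obtain ⟨p1, hp1, p2, hp2, hpne, hfe⟩ :=
    Finset.exists_ne_map_eq_of_card_lt_of_maps_to hcard hmaps
  obtain ⟨i1, j1⟩ := p1
  obtain ⟨i2, j2⟩ := p2
  rw [Finset.mem_product, Finset.mem_range, Finset.mem_range] at hp1 hp2
  set l1 := 2 * n - i1 - j1 with hl1
  set l2 := 2 * n - i2 - j2 with hl2
  have hsum : i1 + j1 + l1 = i2 + j2 + l2 := by omega
  have hne : ¬ (i1 = i2 ∧ j1 = j2) := by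
    rintro ⟨rfl, rfl⟩; exact hpne rfl
  obtain ⟨x, y, z, hone, hn1, hn2, hn3⟩ := shift i1 j1 l1 i2 j2 l2 hsum hne
  set u1 : List ΓN := wrd i1 j1 l1 ++ wrd x y z with hu1
  set u2 : List ΓN := wrd i2 j2 l2 ++ wrd x y z with hu2
  have hcnt1 := count_wrd₂ i1 j1 l1 x y z
  have hcnt2 := count_wrd₂ i2 j2 l2 x y z
  have hud1 : ∀ w ∈ u1, w ≠ ΓN.d := by
    intro w hw; rw [hu1, List.mem_append] at hw
    rcases hw with hw | hw
    · exact wrd_no_d _ _ _ w hw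
    · exact wrd_no_d _ _ _ w hw
  have hud2 : ∀ w ∈ u2, w ≠ ΓN.d := by
    intro w hw; rw [hu2, List.mem_append] at hw
    rcases hw with hw | hw
    · exact wrd_no_d _ _ _ w hw
    · exact wrd_no_d _ _ _ w hw
  have hlen12 : u1.length = u2.length := by
    rw [hu1, hu2]; simp only [List.length_append, wrd_length]; omega
  refine ⟨u1 ++ List.replicate u1.length ΓN.d, u2 ++ List.replicate u2.length ΓN.d,
    ?_, ?_, ?_⟩
  · refine mem_ONE_of u1 hud1 ?_
    unfold exactlyOne eqAB eqBC eqCA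
    rw [← hu1] at hcnt1
    rw [hcnt1.1, hcnt1.2.1, hcnt1.2.2]
    exact hone
  · refine mem_NONE_of u2 hud2 ?_ ?_ ?_
    · unfold eqAB; rw [hcnt2.1, hcnt2.2.1]; exact hn1
    · unfold eqBC; rw [hcnt2.2.1, hcnt2.2.2]; exact hn2
    · unfold eqCA; rw [hcnt2.2.2, hcnt2.1]; exact hn3
  · have hfe' : confFrom M c ((wrd i1 j1 l1).map TSym.letter) =
        confFrom M c ((wrd i2 j2 l2).map TSym.letter) := hfe
    rw [hlen12, hu1, hu2]
    rw [List.map_append, List.map_append, List.map_append, List.map_append,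
      confFrom_append, confFrom_append, confFrom_append, confFrom_append, hfe']

lemma confAfter_tagged (u v : List ΓN) :
    M.confAfter (tagged (u ++ v)) =
      confFrom M (confFrom M (confFrom M (M.q0, 0) [TSym.cent]) (u.map TSym.letter))
        (v.map TSym.letter ++ [TSym.dollar]) := by
  simp [OneD1CA.confAfter, confFrom, tagged, List.foldl_append]

end Stmt6Aux

/-- no 1D1CA solves the promise problem `ONE-NONE`. -/
theorem stmt6 (M : OneD1CA ΓN) :
    ¬ ((∀ w ∈ ONE * NONE, M.accepts w) ∧ (∀ w ∈ NONE * ONE, ¬ M.accepts w)) := by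
  rintro ⟨Hacc, Hrej⟩
  obtain ⟨U1, U2, hU1, hU2, hU⟩ :=
    Stmt6Aux.main M (Stmt6Aux.confFrom M (M.q0, 0) [TSym.cent])
  obtain ⟨Z1, Z2, hZ1, hZ2, hZ⟩ :=
    Stmt6Aux.main M (Stmt6Aux.confFrom M (Stmt6Aux.confFrom M (M.q0, 0) [TSym.cent])
      (U1.map TSym.letter))
  have hy : M.accepts (U1 ++ Z2) :=
    Hacc _ (Language.mem_mul.mpr ⟨U1, hU1, Z2, hZ2, rfl⟩)
  have hnn : ¬ M.accepts (U2 ++ Z1) :=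
    Hrej _ (Language.mem_mul.mpr ⟨U2, hU2, Z1, hZ1, rfl⟩)
  apply hnn
  unfold OneD1CA.accepts at hy ⊢
  rw [Stmt6Aux.confAfter_tagged] at hy ⊢
  rw [← hU, Stmt6Aux.confFrom_append, hZ, ← Stmt6Aux.confFrom_append]
  exact hy
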